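/- (Completeness of the partial m.p. scheme.) Let J ⊆ {1,…,n}, and let h be a multivalued refinement of f on X = ∏_j {0,…,m_j} where m_j > 1 iff j ∈ J. If there is an asynchronous trajectory from x to y in the dynamics of h, then for any J-m.p. state x̂ compatible with x there exists a trajectory in the partial J-m.p. dynamics of f from x̂ to some state ŷ compatible with y. -/
import Mathlib


/-- Activity levels of the most permissive scheme: 0, 1, increasing, decreasing. -/
inductive MPLevel : Type
  | zero | one | inc | dec
deriving DecidableEq

/-- The set γ(x̂) of Boolean states compatible with an m.p. state x̂. -/
def mpGamma {n : ℕ} (x : Fin n → MPLevel) : Set (Fin n → Bool) :=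
  {x' | ∀ j, (x j = MPLevel.zero → x' j = false) ∧ (x j = MPLevel.one → x' j = true)}

/-- The set α(x) of Boolean states compatible with a multivalued state x. -/
def mvAlpha {n : ℕ} (m x : Fin n → ℕ) : Set (Fin n → Bool) :=
  {x' | ∀ j, (x j = 0 → x' j = false) ∧ (x j = m j → x' j = true)}

/-- Coordinatewise embedding of Boolean states into m.p. states. -/
def embBM {n : ℕ} (x : Fin n → Bool) : Fin n → MPLevel :=
  fun j => if x j then MPLevel.one else MPLevel.zero

/-- Embedding of a Boolean state into X = ∏ {0,…,m_j}, sending 1 to m_j. -/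
def embX {n : ℕ} (m : Fin n → ℕ) (x : Fin n → Bool) : Fin n → ℕ :=
  fun j => if x j then m j else 0

/-- Transition of the most permissive dynamics of f at coordinate j0. -/
def mpTransAt {n : ℕ} (f : (Fin n → Bool) → Fin n → Bool) (j0 : Fin n)
    (x y : Fin n → MPLevel) : Prop :=
  (∀ j, j ≠ j0 → y j = x j) ∧
    (((x j0 = MPLevel.zero ∨ x j0 = MPLevel.dec) ∧ (∃ x' ∈ mpGamma x, f x' j0 = true) ∧ y j0 = MPLevel.inc) ∨
     ((x j0 = MPLevel.one ∨ x j0 = MPLevel.inc) ∧ (∃ x' ∈ mpGamma x, f x' j0 = false) ∧ y j0 = MPLevel.dec) ∨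
     (x j0 = MPLevel.inc ∧ y j0 = MPLevel.one) ∨
     (x j0 = MPLevel.dec ∧ y j0 = MPLevel.zero))

/-- Transition of the most permissive dynamics of f. -/
def mpTrans {n : ℕ} (f : (Fin n → Bool) → Fin n → Bool) (x y : Fin n → MPLevel) : Prop :=
  ∃ j0, mpTransAt f j0 x y

/-- Transition of the partial J-most-permissive dynamics of f at coordinate j0. -/
def pmpTransAt {n : ℕ} (J : Set (Fin n)) (f : (Fin n → Bool) → Fin n → Bool) (j0 : Fin n)
    (x y : Fin n → MPLevel) : Prop :=
  (∀ j, j ≠ j0 → y j = x j) ∧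
    (((x j0 = MPLevel.zero ∨ x j0 = MPLevel.dec) ∧ (∃ x' ∈ mpGamma x, f x' j0 = true) ∧ y j0 = MPLevel.inc) ∨
     ((x j0 = MPLevel.one ∨ x j0 = MPLevel.inc) ∧ (∃ x' ∈ mpGamma x, f x' j0 = false) ∧ y j0 = MPLevel.dec) ∨
     (x j0 = MPLevel.inc ∧ y j0 = MPLevel.one) ∨
     (x j0 = MPLevel.dec ∧ y j0 = MPLevel.zero) ∨
     (j0 ∉ J ∧ x j0 = MPLevel.zero ∧ (∃ x' ∈ mpGamma x, f x' j0 = true) ∧ y j0 = MPLevel.one) ∨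
     (j0 ∉ J ∧ x j0 = MPLevel.one ∧ (∃ x' ∈ mpGamma x, f x' j0 = false) ∧ y j0 = MPLevel.zero))

/-- Transition of the partial J-most-permissive dynamics of f. -/
def pmpTrans {n : ℕ} (J : Set (Fin n)) (f : (Fin n → Bool) → Fin n → Bool)
    (x y : Fin n → MPLevel) : Prop :=
  ∃ j0, pmpTransAt J f j0 x y

/-- A state of X_{J m.p.}: coordinates outside J are Boolean. -/
def inXJ {n : ℕ} (J : Set (Fin n)) (x : Fin n → MPLevel) : Prop :=
  ∀ j, j ∉ J → (x j = MPLevel.zero ∨ x j = MPLevel.one)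

/-- Asynchronous transition of a Boolean model f. -/
def asyncTransB {n : ℕ} (f : (Fin n → Bool) → Fin n → Bool) (x y : Fin n → Bool) : Prop :=
  ∃ j0, f x j0 ≠ x j0 ∧ y j0 = f x j0 ∧ ∀ j, j ≠ j0 → y j = x j

/-- Asynchronous transition of a multivalued model h (one coordinate moves by 1 toward its target). -/
def asyncTrans {n : ℕ} (h : (Fin n → ℕ) → Fin n → ℕ) (x y : Fin n → ℕ) : Prop :=
  ∃ j0, h x j0 ≠ x j0 ∧ (∀ j, j ≠ j0 → y j = x j) ∧
    ((x j0 < h x j0 ∧ y j0 = x j0 + 1) ∨ (h x j0 < x j0 ∧ y j0 = x j0 - 1))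

/-- An m.p. state x̂ is compatible with a multivalued state x. -/
def mpCompat {n : ℕ} (m x : Fin n → ℕ) (xh : Fin n → MPLevel) : Prop :=
  ∀ j, (x j = 0 → xh j = MPLevel.zero) ∧ (x j = m j → xh j = MPLevel.one) ∧
    (0 < x j → x j < m j → (xh j = MPLevel.inc ∨ xh j = MPLevel.dec))

/-- h is a multivalued model on X = ∏ {0,…,m_j}: maps X to X, moving each coordinate by at most 1. -/
def isMVModel {n : ℕ} (m : Fin n → ℕ) (h : (Fin n → ℕ) → Fin n → ℕ) : Prop :=
  ∀ x, (∀ j, x j ≤ m j) → ∀ j, h x j ≤ m j ∧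
    (h x j = x j ∨ h x j = x j + 1 ∨ h x j + 1 = x j)

/-- h is a multivalued refinement of the Boolean model f. -/
def isRefinement {n : ℕ} (m : Fin n → ℕ) (f : (Fin n → Bool) → Fin n → Bool)
    (h : (Fin n → ℕ) → Fin n → ℕ) : Prop :=
  ∀ x, (∀ j, x j ≤ m j) → ∀ j,
    (h x j < x j → ∃ x' ∈ mvAlpha m x, f x' j = false ∧ x' j = true) ∧
    (x j < h x j → ∃ x' ∈ mvAlpha m x, f x' j = true ∧ x' j = false)

/-- A literal in a DNF: a regulator index, a polarity, and a threshold (used in the multivalued reading). -/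
structure Lit (n : ℕ) where
  idx : Fin n
  pos : Bool
  thr : ℕ

/-- Boolean evaluation of a literal (threshold ignored). -/
def evalLitB {n : ℕ} (x : Fin n → Bool) (l : Lit n) : Bool :=
  if l.pos then x l.idx else !(x l.idx)

/-- Multivalued evaluation of a literal: x_idx ≥ thr+1 for a positive literal, x_idx < thr+1 otherwise. -/
def evalLitM {n : ℕ} (x : Fin n → ℕ) (l : Lit n) : Bool :=
  if l.pos then decide (l.thr + 1 ≤ x l.idx) else decide (x l.idx < l.thr + 1)

/-- Boolean evaluation of a DNF (list of conjunctive clauses). -/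
def evalDNFB {n : ℕ} (x : Fin n → Bool) (φ : List (List (Lit n))) : Bool :=
  φ.any fun c => c.all (evalLitB x)

/-- Multivalued evaluation of a DNF via the thresholds. -/
def evalDNFM {n : ℕ} (x : Fin n → ℕ) (φ : List (List (Lit n))) : Bool :=
  φ.any fun c => c.all (evalLitM x)

/-- Refinement built from the DNF threshold parameterisation:
h_j(x) = max(0, min(m_j, x_j + H_j(x))) with H_j(x) = +1 iff the multivalued DNF of f_j is true. -/
def hDNF {n : ℕ} (m : Fin n → ℕ) (φ : Fin n → List (List (Lit n)))
    (x : Fin n → ℕ) : Fin n → ℕ :=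
  fun j => if evalDNFM x (φ j) then min (m j) (x j + 1) else x j - 1

lemma compat_zero {n : ℕ} {m x : Fin n → ℕ} {xh : Fin n → MPLevel} {j : Fin n}
    (hc : mpCompat m x xh) (hx : x j ≤ m j) (h0 : xh j = MPLevel.zero) : x j = 0 := by
  rcases Nat.eq_zero_or_pos (x j) with h | h
  · exact h
  rcases eq_or_lt_of_le hx with he | hl
  · have := (hc j).2.1 he; rw [this] at h0; cases h0
  · rcases (hc j).2.2 h hl with h' | h' <;> rw [h'] at h0 <;> cases h0

lemma compat_one {n : ℕ} {m x : Fin n → ℕ} {xh : Fin n → MPLevel} {j : Fin n}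
    (hc : mpCompat m x xh) (hx : x j ≤ m j) (h1 : xh j = MPLevel.one) : x j = m j := by
  rcases Nat.eq_zero_or_pos (x j) with h | h
  · have := (hc j).1 h; rw [this] at h1; cases h1
  rcases eq_or_lt_of_le hx with he | hl
  · exact he
  · rcases (hc j).2.2 h hl with h' | h' <;> rw [h'] at h1 <;> cases h1

lemma compat_gamma {n : ℕ} {m x : Fin n → ℕ} {xh : Fin n → MPLevel}
    (hc : mpCompat m x xh) (hx : ∀ j, x j ≤ m j) : mvAlpha m x ⊆ mpGamma xh := by
  intro x' hx' j
  exact ⟨fun h0 => (hx' j).1 (compat_zero hc (hx j) h0),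
         fun h1 => (hx' j).2 (compat_one hc (hx j) h1)⟩

lemma pmp_step {n : ℕ} (f : (Fin n → Bool) → Fin n → Bool) (J : Set (Fin n))
    (m : Fin n → ℕ) (hJ : ∀ j, 1 < m j ↔ j ∈ J)
    (h : (Fin n → ℕ) → Fin n → ℕ) (hmv : isMVModel m h) (href : isRefinement m f h)
    (x y : Fin n → ℕ) (hx : ∀ j, x j ≤ m j) (hstep : asyncTrans h x y)
    (xh : Fin n → MPLevel) (hc : mpCompat m x xh) :
    ∃ yh, mpCompat m y yh ∧ Relation.ReflTransGen (pmpTrans J f) xh yh := by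
  obtain ⟨j0, hne, hfix, hdir⟩ := hstep
  have hhb := (hmv x hx j0).1
  have compat_upd : ∀ L : MPLevel,
      (y j0 = 0 → L = MPLevel.zero) → (y j0 = m j0 → L = MPLevel.one) →
      (0 < y j0 → y j0 < m j0 → L = MPLevel.inc ∨ L = MPLevel.dec) →
      mpCompat m y (Function.update xh j0 L) := by
    intro L h0 h1 h2 j
    rcases eq_or_ne j j0 with hj | hj
    · subst hj; simp only [Function.update_self]; exact ⟨h0, h1, h2⟩
    · rw [Function.update_of_ne hj, hfix j hj]; exact hc j
  rcases hdir with ⟨hlt, hy⟩ | ⟨hlt, hy⟩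
  · -- increase: y j0 = x j0 + 1
    obtain ⟨x', hx'A, hfx, -⟩ := (href x hx j0).2 hlt
    have hx'G : x' ∈ mpGamma xh := compat_gamma hc hx hx'A
    have hym : y j0 ≤ m j0 := by omega
    rcases eq_or_lt_of_le hym with heq | hlt2
    · -- y j0 = m j0
      rcases Nat.lt_or_ge 1 (m j0) with hm1 | hm1
      · have hxpos : 0 < x j0 := by omega
        have hxlt : x j0 < m j0 := by omega
        rcases (hc j0).2.2 hxpos hxlt with hinc | hdec
        · exact ⟨Function.update xh j0 MPLevel.one,
            compat_upd _ (fun h0 => absurd h0 (by omega)) (fun _ => rfl)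
              (fun _ h2 => absurd h2 (by omega)),
            Relation.ReflTransGen.single ⟨j0, fun j hj => Function.update_of_ne hj _ _,
              Or.inr (Or.inr (Or.inl ⟨hinc, Function.update_self _ _ _⟩))⟩⟩
        · refine ⟨Function.update xh j0 MPLevel.one,
            compat_upd _ (fun h0 => absurd h0 (by omega)) (fun _ => rfl)
              (fun _ h2 => absurd h2 (by omega)), ?_⟩
          have s1 : pmpTrans J f xh (Function.update xh j0 MPLevel.inc) :=
            ⟨j0, fun j hj => Function.update_of_ne hj _ _,
              Or.inl ⟨Or.inr hdec, ⟨x', hx'G, hfx⟩, Function.update_self _ _ _⟩⟩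
          have s2 : pmpTrans J f (Function.update xh j0 MPLevel.inc)
              (Function.update xh j0 MPLevel.one) :=
            ⟨j0, fun j hj => by rw [Function.update_of_ne hj, Function.update_of_ne hj],
              Or.inr (Or.inr (Or.inl ⟨Function.update_self _ _ _, Function.update_self _ _ _⟩))⟩
          exact Relation.ReflTransGen.head s1 (Relation.ReflTransGen.single s2)
      · -- m j0 = 1, x j0 = 0, j0 ∉ J
        have hx0 : x j0 = 0 := by omega
        have hz : xh j0 = MPLevel.zero := (hc j0).1 hx0
        have hnJ : j0 ∉ J := fun hmem => by have := (hJ j0).2 hmem; omega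
        exact ⟨Function.update xh j0 MPLevel.one,
          compat_upd _ (fun h0 => absurd h0 (by omega)) (fun _ => rfl)
            (fun _ h2 => absurd h2 (by omega)),
          Relation.ReflTransGen.single ⟨j0, fun j hj => Function.update_of_ne hj _ _,
            Or.inr (Or.inr (Or.inr (Or.inr (Or.inl ⟨hnJ, hz, ⟨x', hx'G, hfx⟩,
              Function.update_self _ _ _⟩))))⟩⟩
    · -- y j0 < m j0
      rcases Nat.eq_zero_or_pos (x j0) with hx0 | hxpos
      · have hz : xh j0 = MPLevel.zero := (hc j0).1 hx0
        exact ⟨Function.update xh j0 MPLevel.inc,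
          compat_upd _ (fun h0 => absurd h0 (by omega)) (fun h1 => absurd h1 (by omega))
            (fun _ _ => Or.inl rfl),
          Relation.ReflTransGen.single ⟨j0, fun j hj => Function.update_of_ne hj _ _,
            Or.inl ⟨Or.inl hz, ⟨x', hx'G, hfx⟩, Function.update_self _ _ _⟩⟩⟩
      · have hxlt : x j0 < m j0 := by omega
        rcases (hc j0).2.2 hxpos hxlt with hinc | hdec
        · refine ⟨xh, ?_, Relation.ReflTransGen.refl⟩
          intro j
          rcases eq_or_ne j j0 with hj | hj
          · subst hj
            exact ⟨fun h0 => absurd h0 (by omega), fun h1 => absurd h1 (by omega),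
              fun _ _ => Or.inl hinc⟩
          · rw [hfix j hj]; exact hc j
        · exact ⟨Function.update xh j0 MPLevel.inc,
            compat_upd _ (fun h0 => absurd h0 (by omega)) (fun h1 => absurd h1 (by omega))
              (fun _ _ => Or.inl rfl),
            Relation.ReflTransGen.single ⟨j0, fun j hj => Function.update_of_ne hj _ _,
              Or.inl ⟨Or.inr hdec, ⟨x', hx'G, hfx⟩, Function.update_self _ _ _⟩⟩⟩
  · -- decrease: y j0 = x j0 - 1
    obtain ⟨x', hx'A, hfx, -⟩ := (href x hx j0).1 hlt
    have hx'G : x' ∈ mpGamma xh := compat_gamma hc hx hx'A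
    have hxpos : 0 < x j0 := by omega
    rcases Nat.eq_zero_or_pos (y j0) with hy0 | hypos
    · -- y j0 = 0, so x j0 = 1
      have hx1 : x j0 = 1 := by omega
      rcases Nat.lt_or_ge 1 (m j0) with hm1 | hm1
      · have hxlt : x j0 < m j0 := by omega
        rcases (hc j0).2.2 hxpos hxlt with hinc | hdec
        · refine ⟨Function.update xh j0 MPLevel.zero,
            compat_upd _ (fun _ => rfl) (fun h1 => absurd h1 (by omega))
              (fun h2 _ => absurd h2 (by omega)), ?_⟩
          have s1 : pmpTrans J f xh (Function.update xh j0 MPLevel.dec) :=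
            ⟨j0, fun j hj => Function.update_of_ne hj _ _,
              Or.inr (Or.inl ⟨Or.inr hinc, ⟨x', hx'G, hfx⟩, Function.update_self _ _ _⟩)⟩
          have s2 : pmpTrans J f (Function.update xh j0 MPLevel.dec)
              (Function.update xh j0 MPLevel.zero) :=
            ⟨j0, fun j hj => by rw [Function.update_of_ne hj, Function.update_of_ne hj],
              Or.inr (Or.inr (Or.inr (Or.inl ⟨Function.update_self _ _ _,
                Function.update_self _ _ _⟩)))⟩
          exact Relation.ReflTransGen.head s1 (Relation.ReflTransGen.single s2)
        · exact ⟨Function.update xh j0 MPLevel.zero,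
            compat_upd _ (fun _ => rfl) (fun h1 => absurd h1 (by omega))
              (fun h2 _ => absurd h2 (by omega)),
            Relation.ReflTransGen.single ⟨j0, fun j hj => Function.update_of_ne hj _ _,
              Or.inr (Or.inr (Or.inr (Or.inl ⟨hdec, Function.update_self _ _ _⟩)))⟩⟩
      · -- m j0 = 1, x j0 = m j0, j0 ∉ J
        have hxb := hx j0
        have hxm : x j0 = m j0 := by omega
        have ho : xh j0 = MPLevel.one := (hc j0).2.1 hxm
        have hnJ : j0 ∉ J := fun hmem => by have := (hJ j0).2 hmem; omega
        exact ⟨Function.update xh j0 MPLevel.zero,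
          compat_upd _ (fun _ => rfl) (fun h1 => absurd h1 (by omega))
            (fun h2 _ => absurd h2 (by omega)),
          Relation.ReflTransGen.single ⟨j0, fun j hj => Function.update_of_ne hj _ _,
            Or.inr (Or.inr (Or.inr (Or.inr (Or.inr ⟨hnJ, ho, ⟨x', hx'G, hfx⟩,
              Function.update_self _ _ _⟩))))⟩⟩
    · -- 0 < y j0
      have hym : y j0 < m j0 := by have := hx j0; omega
      rcases eq_or_lt_of_le (hx j0) with hxm | hxlt
      · have ho : xh j0 = MPLevel.one := (hc j0).2.1 hxm
        exact ⟨Function.update xh j0 MPLevel.dec,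
          compat_upd _ (fun h0 => absurd h0 (by omega)) (fun h1 => absurd h1 (by omega))
            (fun _ _ => Or.inr rfl),
          Relation.ReflTransGen.single ⟨j0, fun j hj => Function.update_of_ne hj _ _,
            Or.inr (Or.inl ⟨Or.inl ho, ⟨x', hx'G, hfx⟩, Function.update_self _ _ _⟩)⟩⟩
      · rcases (hc j0).2.2 hxpos hxlt with hinc | hdec
        · exact ⟨Function.update xh j0 MPLevel.dec,
            compat_upd _ (fun h0 => absurd h0 (by omega)) (fun h1 => absurd h1 (by omega))
              (fun _ _ => Or.inr rfl),
            Relation.ReflTransGen.single ⟨j0, fun j hj => Function.update_of_ne hj _ _,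
              Or.inr (Or.inl ⟨Or.inr hinc, ⟨x', hx'G, hfx⟩, Function.update_self _ _ _⟩)⟩⟩
        · refine ⟨xh, ?_, Relation.ReflTransGen.refl⟩
          intro j
          rcases eq_or_ne j j0 with hj | hj
          · subst hj
            exact ⟨fun h0 => absurd h0 (by omega), fun h1 => absurd h1 (by omega),
              fun _ _ => Or.inr hdec⟩
          · rw [hfix j hj]; exact hc j

lemma async_bound {n : ℕ} (m : Fin n → ℕ) (h : (Fin n → ℕ) → Fin n → ℕ)
    (hmv : isMVModel m h) {x y : Fin n → ℕ} (hx : ∀ j, x j ≤ m j)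
    (hs : asyncTrans h x y) : ∀ j, y j ≤ m j := by
  obtain ⟨j0, hne, hfix, hdir⟩ := hs
  intro j
  rcases eq_or_ne j j0 with hj | hj
  · subst hj
    have := (hmv x hx j).1
    have := hx j
    rcases hdir with ⟨h1, h2⟩ | ⟨h1, h2⟩ <;> omega
  · rw [hfix j hj]; exact hx j

lemma traj_bound {n : ℕ} (m : Fin n → ℕ) (h : (Fin n → ℕ) → Fin n → ℕ)
    (hmv : isMVModel m h) {x y : Fin n → ℕ} (hx : ∀ j, x j ≤ m j)
    (ht : Relation.ReflTransGen (asyncTrans h) x y) : ∀ j, y j ≤ m j := by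
  induction ht with
  | refl => exact hx
  | tail _ hbc ih => exact async_bound m h hmv ih hbc

/-- completeness of the partial m.p. scheme: let h be a refinement of f on
X = ∏ {0,…,m_j} with m_j > 1 iff j ∈ J. If there is an asynchronous trajectory from x to y
in the dynamics of h, then from any J-m.p. state x̂ compatible with x there is a trajectory
in the partial J-m.p. dynamics of f to some state ŷ compatible with y. -/
theorem pmp_completeness {n : ℕ} (f : (Fin n → Bool) → Fin n → Bool)
    (J : Set (Fin n)) (m : Fin n → ℕ) (hm : ∀ j, 1 ≤ m j)
    (hJ : ∀ j, 1 < m j ↔ j ∈ J)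
    (h : (Fin n → ℕ) → Fin n → ℕ) (hmv : isMVModel m h) (href : isRefinement m f h)
    (x y : Fin n → ℕ) (hx : ∀ j, x j ≤ m j)
    (ht : Relation.ReflTransGen (asyncTrans h) x y)
    (xh : Fin n → MPLevel) (hXJ : inXJ J xh) (hc : mpCompat m x xh) :
    ∃ yh : Fin n → MPLevel, mpCompat m y yh ∧
      Relation.ReflTransGen (pmpTrans J f) xh yh := by
  induction ht with
  | refl => exact ⟨xh, hc, Relation.ReflTransGen.refl⟩
  | tail hab hbc ih =>
      obtain ⟨bh, hcb, htr⟩ := ih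
      have hbb := traj_bound m h hmv hx hab
      obtain ⟨yh, hcy, htr2⟩ := pmp_step f J m hJ h hmv href _ _ hbb hbc bh hcb
      exact ⟨yh, hcy, htr.trans htr2⟩
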